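/- Let G be a finite tree with n ≥ 3 vertices, all of degree less than n/(log n)^{1+ε}, and let x be a vertex such that all components of G − x have size at most n/2. Define, for the components H of G − x, the index sets I = {H : |H| ≥ A(log n)^{4+ε}}, J_1 = {H : (1/4)(log n)^{1+ε} ≤ |H| < (log n)^{2+ε}}, J_2 = {H : (log n)^{2+ε} ≤ |H| < (log n)^{3+ε}}, J_3 = {H : (log n)^{3+ε} ≤ |H| < A(log n)^{4+ε}}. Then the components outside I ∪ J_1 ∪ J_2 ∪ J_3 cover at most n/4 vertices, and hence at least one of the following holds: (i) the I-components cover ≥ n/2 vertices and |I| ≤ n/(A(log n)^{4+ε}); (ii) |J_1| ≥ n/(12(log n)^{2+ε}); (iii) |J_2| ≥ n/(12(log n)^{3+ε}); (iv) |J_3| ≥ n/(12A(log n)^{4+ε}). -/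

import Mathlib

/-- The size of a connected component of `G` with the vertex `x` removed. -/
noncomputable def compSize {V : Type*} (G : SimpleGraph V) (x : V)
    (c : (G.induce {v : V | v ≠ x}).ConnectedComponent) : ℕ :=
  c.supp.ncard

/-- The number of vertices covered by the components of `G − x` whose size satisfies `P`. -/
noncomputable def coverSize {V : Type*} (G : SimpleGraph V) (x : V) (P : ℕ → Prop) : ℕ :=
  {v : V | ∃ hv : v ≠ x,
    P (compSize G x ((G.induce {v' : V | v' ≠ x}).connectedComponentMk ⟨v, hv⟩))}.ncard

/-- The number of components of `G − x` whose size satisfies `P`. -/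
noncomputable def numComps {V : Type*} (G : SimpleGraph V) (x : V) (P : ℕ → Prop) : ℕ :=
  {c : (G.induce {v : V | v ≠ x}).ConnectedComponent | P (compSize G x c)}.ncard

open Finset

private lemma compSize_pos {V : Type*} [Fintype V] (G : SimpleGraph V) (x : V)
    (c : (G.induce {v : V | v ≠ x}).ConnectedComponent) : 0 < compSize G x c := by
  obtain ⟨u, hu⟩ := c.exists_rep
  rw [compSize, Set.ncard_pos (Set.toFinite _)]
  exact ⟨u, by simp only [SimpleGraph.ConnectedComponent.mem_supp_iff]; exact hu⟩

private lemma exists_nbr {V : Type*} (G : SimpleGraph V) :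
    ∀ {v z : V} (_ : G.Walk v z) (hv : v ≠ z),
    ∃ (y : V) (hy : y ≠ z), G.Adj z y ∧
      (G.induce {v' : V | v' ≠ z}).Reachable ⟨v, hv⟩ ⟨y, hy⟩ := by
  intro v z w
  induction w with
  | nil => intro hv; exact absurd rfl hv
  | @cons a b c h p ih =>
    intro hv
    by_cases hb : b = c
    · subst hb; exact ⟨a, hv, h.symm, SimpleGraph.Reachable.refl _⟩
    · obtain ⟨y, hy, hadj, hr⟩ := ih hb
      have hab : (G.induce {v' : V | v' ≠ c}).Adj ⟨a, hv⟩ ⟨b, hb⟩ := by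
        simpa [SimpleGraph.comap_adj] using h
      exact ⟨y, hy, hadj, (hab.reachable).trans hr⟩

private lemma card_cc_le_degree {V : Type*} [Fintype V] (G : SimpleGraph V) [DecidableRel G.Adj]
    (hconn : G.Connected) (x : V)
    [Fintype ((G.induce {v : V | v ≠ x}).ConnectedComponent)] :
    Fintype.card ((G.induce {v : V | v ≠ x}).ConnectedComponent) ≤ G.degree x := by
  classical
  have hex : ∀ c : (G.induce {v : V | v ≠ x}).ConnectedComponent,
      ∃ p : {v : V | v ≠ x}, G.Adj x p.val ∧
        (G.induce {v' : V | v' ≠ x}).connectedComponentMk p = c := by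
    intro c
    obtain ⟨u, hu⟩ := c.exists_rep
    obtain ⟨y, hy, hadj, hr⟩ := exists_nbr G ((hconn.preconnected u.val x).some) u.2
    refine ⟨⟨y, hy⟩, hadj, ?_⟩
    rw [← hu]
    exact (SimpleGraph.ConnectedComponent.sound hr.symm)
  choose g hg1 hg2 using hex
  have hinj : Function.Injective (fun c => (⟨(g c).val, hg1 c⟩ : G.neighborSet x)) := by
    intro c1 c2 hcc
    simp only [Subtype.mk.injEq] at hcc
    rw [← hg2 c1, ← hg2 c2, (Subtype.ext (congrArg (fun p : G.neighborSet x => p.val) hcc : (g c1).val = (g c2).val) : g c1 = g c2)]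
  calc Fintype.card ((G.induce {v : V | v ≠ x}).ConnectedComponent)
      ≤ Fintype.card (G.neighborSet x) := Fintype.card_le_of_injective _ hinj
    _ = G.degree x := G.card_neighborSet_eq_degree x

private lemma numComps_eq {V : Type*} [Fintype V] (G : SimpleGraph V) (x : V) (P : ℕ → Prop)
    [Fintype ((G.induce {v : V | v ≠ x}).ConnectedComponent)]
    [DecidablePred fun c : (G.induce {v : V | v ≠ x}).ConnectedComponent => P (compSize G x c)] :
    numComps G x P = (univ.filter (fun c => P (compSize G x c))).card := by
  classical
  rw [numComps, Set.ncard_eq_toFinset_card', Set.toFinset_setOf]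

private lemma supp_toFinset {V : Type*} [Fintype V] (G : SimpleGraph V) (x : V)
    [Fintype ↥{v : V | v ≠ x}]
    (c : (G.induce {v : V | v ≠ x}).ConnectedComponent)
    [DecidablePred fun u : ↥{v : V | v ≠ x} =>
      (G.induce {v' : V | v' ≠ x}).connectedComponentMk u = c] :
    compSize G x c =
      (univ.filter (fun u : ↥{v : V | v ≠ x} =>
        (G.induce {v' : V | v' ≠ x}).connectedComponentMk u = c)).card := by
  classical
  rw [compSize, Set.ncard_eq_toFinset_card']
  congr 1
  ext u
  simp [SimpleGraph.ConnectedComponent.mem_supp_iff]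

private lemma cover_eq {V : Type*} [Fintype V] (G : SimpleGraph V) (x : V) (P : ℕ → Prop)
    [Fintype ((G.induce {v : V | v ≠ x}).ConnectedComponent)]
    [DecidablePred fun c : (G.induce {v : V | v ≠ x}).ConnectedComponent => P (compSize G x c)] :
    coverSize G x P = ∑ c ∈ univ.filter (fun c => P (compSize G x c)), compSize G x c := by
  classical
  have himg : {v : V | ∃ hv : v ≠ x,
        P (compSize G x ((G.induce {v' : V | v' ≠ x}).connectedComponentMk ⟨v, hv⟩))}
      = Subtype.val '' {u : ↥{v : V | v ≠ x} |
          P (compSize G x ((G.induce {v' : V | v' ≠ x}).connectedComponentMk u))} := by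
    ext v
    constructor
    · rintro ⟨hv, hP⟩; exact ⟨⟨v, hv⟩, hP, rfl⟩
    · rintro ⟨⟨u, hu⟩, hP, rfl⟩; exact ⟨hu, hP⟩
  rw [coverSize, himg, Set.ncard_image_of_injective _ Subtype.val_injective,
    Set.ncard_eq_toFinset_card', Set.toFinset_setOf]
  rw [Finset.card_eq_sum_card_fiberwise
    (f := fun u : ↥{v : V | v ≠ x} => (G.induce {v' : V | v' ≠ x}).connectedComponentMk u)
    (t := univ.filter (fun c => P (compSize G x c)))
    (fun u hu => by simp only [Finset.mem_coe, mem_filter, mem_univ, true_and] at hu ⊢; exact hu)]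
  refine Finset.sum_congr rfl fun c hc => ?_
  simp only [mem_filter, mem_univ, true_and] at hc
  rw [supp_toFinset G x c]
  congr 1
  ext u
  simp only [mem_filter, mem_univ, true_and, and_iff_right_iff_imp]
  intro h
  rw [h]; exact hc

private lemma card_eq_one_add {V : Type*} [Fintype V] (G : SimpleGraph V) (x : V)
    [Fintype ((G.induce {v : V | v ≠ x}).ConnectedComponent)] :
    Fintype.card V = 1 + ∑ c : (G.induce {v : V | v ≠ x}).ConnectedComponent, compSize G x c := by
  classical
  have h0 : ({x} : Set V).ncard + ({x} : Set V)ᶜ.ncard = Nat.card V :=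
    Set.ncard_add_ncard_compl _
  have hc : ({x} : Set V)ᶜ = {v : V | v ≠ x} := by ext v; simp
  have h1 : {v : V | v ≠ x}.ncard = ∑ c : (G.induce {v : V | v ≠ x}).ConnectedComponent,
      compSize G x c := by
    rw [← Nat.card_coe_set_eq, Nat.card_eq_fintype_card, ← Finset.card_univ]
    rw [Finset.card_eq_sum_card_fiberwise
      (f := fun u : ↥{v : V | v ≠ x} => (G.induce {v' : V | v' ≠ x}).connectedComponentMk u)
      (t := univ) (fun u _ => mem_univ _)]
    exact Finset.sum_congr rfl fun c _ => (supp_toFinset G x c).symm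
  have h2 : ({x} : Set V).ncard = 1 := Set.ncard_singleton x
  rw [← Nat.card_eq_fintype_card, ← h0, h2, hc, h1]

theorem stmt_9 {V : Type*} [Fintype V] {G : SimpleGraph V} [DecidableRel G.Adj]
    (hT : G.IsTree) (x : V) (n : ℕ) (hn : Fintype.card V = n) (hn3 : 3 ≤ n)
    (ε A : ℝ) (hε : 0 < ε) (hA : 0 < A)
    (hdeg : ∀ v : V, (G.degree v : ℝ) < (n : ℝ) / (Real.log n) ^ (1 + ε))
    (hcent : ∀ c : (G.induce {v : V | v ≠ x}).ConnectedComponent,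
      (c.supp.ncard : ℝ) ≤ (n : ℝ) / 2) :
    (coverSize G x (fun k =>
        ¬ (A * (Real.log n) ^ (4 + ε) ≤ (k : ℝ)) ∧
        ¬ ((1 / 4 : ℝ) * (Real.log n) ^ (1 + ε) ≤ (k : ℝ) ∧
            (k : ℝ) < A * (Real.log n) ^ (4 + ε))) : ℝ) ≤ (n : ℝ) / 4 ∧
    (((n : ℝ) / 2 ≤ (coverSize G x (fun k => A * (Real.log n) ^ (4 + ε) ≤ (k : ℝ)) : ℝ) ∧
        (numComps G x (fun k => A * (Real.log n) ^ (4 + ε) ≤ (k : ℝ)) : ℝ)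
          ≤ (n : ℝ) / (A * (Real.log n) ^ (4 + ε))) ∨
      (n : ℝ) / (12 * (Real.log n) ^ (2 + ε)) ≤ (numComps G x (fun k =>
          (1 / 4 : ℝ) * (Real.log n) ^ (1 + ε) ≤ (k : ℝ) ∧
          (k : ℝ) < (Real.log n) ^ (2 + ε)) : ℝ) ∨
      (n : ℝ) / (12 * (Real.log n) ^ (3 + ε)) ≤ (numComps G x (fun k =>
          (Real.log n) ^ (2 + ε) ≤ (k : ℝ) ∧ (k : ℝ) < (Real.log n) ^ (3 + ε)) : ℝ) ∨
      (n : ℝ) / (12 * A * (Real.log n) ^ (4 + ε)) ≤ (numComps G x (fun k =>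
          (Real.log n) ^ (3 + ε) ≤ (k : ℝ) ∧ (k : ℝ) < A * (Real.log n) ^ (4 + ε)) : ℝ)) := by
  classical
  haveI : Fintype ↥{v : V | v ≠ x} := Fintype.ofFinite _
  haveI : Fintype ((G.induce {v : V | v ≠ x}).ConnectedComponent) := Fintype.ofFinite _
  have hn3' : (3 : ℝ) ≤ (n : ℝ) := by exact_mod_cast hn3
  have hL1 : (1 : ℝ) < Real.log n := by
    have h3 : (1 : ℝ) < Real.log 3 := (Real.lt_log_iff_exp_lt (by norm_num)).mpr
      (lt_of_lt_of_le Real.exp_one_lt_d9 (by norm_num))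
    exact lt_of_lt_of_le h3 (Real.log_le_log (by norm_num) hn3')
  have hL0 : (0 : ℝ) < Real.log n := lt_trans one_pos hL1
  have hP1 : (0 : ℝ) < (Real.log n) ^ (1 + ε) := Real.rpow_pos_of_pos hL0 _
  have hP2 : (0 : ℝ) < (Real.log n) ^ (2 + ε) := Real.rpow_pos_of_pos hL0 _
  have hP3 : (0 : ℝ) < (Real.log n) ^ (3 + ε) := Real.rpow_pos_of_pos hL0 _
  have hP4 : (0 : ℝ) < (Real.log n) ^ (4 + ε) := Real.rpow_pos_of_pos hL0 _
  have hm12 : (Real.log n) ^ (1 + ε) ≤ (Real.log n) ^ (2 + ε) :=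
    (Real.rpow_le_rpow_left_iff hL1).mpr (by linarith)
  have hm23 : (Real.log n) ^ (2 + ε) ≤ (Real.log n) ^ (3 + ε) :=
    (Real.rpow_le_rpow_left_iff hL1).mpr (by linarith)
  set L := Real.log (n : ℝ) with hLdef
  set B := (1 / 4 : ℝ) * L ^ (1 + ε) with hBdef
  set b1 := L ^ (2 + ε) with hb1def
  set b2 := L ^ (3 + ε) with hb2def
  set b3 := A * L ^ (4 + ε) with hb3def
  have hBpos : 0 < B := by positivity
  have hb1pos : 0 < b1 := hP2
  have hb2pos : 0 < b2 := hP3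
  have hb3pos : 0 < b3 := mul_pos hA hP4
  -- component counting facts
  have hccdeg : Fintype.card ((G.induce {v : V | v ≠ x}).ConnectedComponent) ≤ G.degree x :=
    card_cc_le_degree G hT.isConnected x
  have hdegx : (G.degree x : ℝ) < (n : ℝ) / L ^ (1 + ε) := hdeg x
  have htot : n = 1 + ∑ c : (G.induce {v : V | v ≠ x}).ConnectedComponent, compSize G x c := by
    rw [← hn]; exact card_eq_one_add G x
  set N := ∑ c : (G.induce {v : V | v ≠ x}).ConnectedComponent, compSize G x c with hNdef
  have hprod : (n : ℝ) / L ^ (1 + ε) * B = (n : ℝ) / 4 := by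
    rw [hBdef]; field_simp
  constructor
  · -- first conjunct
    rw [cover_eq G x (fun k =>
        ¬ (b3 ≤ (k : ℝ)) ∧ ¬ (B ≤ (k : ℝ) ∧ (k : ℝ) < b3))]
    set S0 := univ.filter (fun c : (G.induce {v : V | v ≠ x}).ConnectedComponent =>
      ¬ (b3 ≤ (compSize G x c : ℝ)) ∧
      ¬ (B ≤ (compSize G x c : ℝ) ∧ (compSize G x c : ℝ) < b3)) with hS0
    have hb : ∀ c ∈ S0, (compSize G x c : ℝ) ≤ B := by
      intro c hc
      rw [hS0, mem_filter] at hc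
      obtain ⟨-, h1, h2⟩ := hc
      by_contra hcon
      exact h2 ⟨(not_le.mp hcon).le, not_le.mp h1⟩
    have hsum : ((∑ c ∈ S0, compSize G x c : ℕ) : ℝ) ≤ (S0.card : ℝ) * B := by
      push_cast
      simpa [nsmul_eq_mul] using Finset.sum_le_card_nsmul S0 (fun c => (compSize G x c : ℝ)) B hb
    have hcard : (S0.card : ℝ) ≤ (G.degree x : ℝ) := by
      have hcardN : S0.card ≤ G.degree x :=
        le_trans (le_trans (Finset.card_le_univ S0) (le_of_eq Finset.card_univ)) hccdeg
      exact_mod_cast hcardN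
    have h1 : (S0.card : ℝ) * B ≤ (G.degree x : ℝ) * B :=
      mul_le_mul_of_nonneg_right hcard hBpos.le
    have h2 : (G.degree x : ℝ) * B < ((n : ℝ) / L ^ (1 + ε)) * B :=
      mul_lt_mul_of_pos_right hdegx hBpos
    linarith [hprod ▸ h2]
  · by_cases hC : (n : ℝ) / 2 ≤ (coverSize G x (fun k => b3 ≤ (k : ℝ)) : ℝ)
    · left
      refine ⟨hC, ?_⟩
      rw [numComps_eq G x (fun k => b3 ≤ (k : ℝ))]
      set SI := univ.filter (fun c : (G.induce {v : V | v ≠ x}).ConnectedComponent =>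
        b3 ≤ (compSize G x c : ℝ)) with hSI
      have hlow : (SI.card : ℝ) * b3 ≤ ((∑ c ∈ SI, compSize G x c : ℕ) : ℝ) := by
        push_cast
        simpa [nsmul_eq_mul] using Finset.card_nsmul_le_sum SI
          (fun c => (compSize G x c : ℝ)) b3
          (fun c hc => (mem_filter.mp hc).2)
      have hle : (∑ c ∈ SI, compSize G x c) ≤ N :=
        Finset.sum_le_sum_of_subset (Finset.subset_univ SI)
      have hNn : (N : ℝ) ≤ (n : ℝ) := by
        have : N ≤ n := by omega
        exact_mod_cast this
      rw [le_div_iff₀ hb3pos]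
      calc (SI.card : ℝ) * b3 ≤ ((∑ c ∈ SI, compSize G x c : ℕ) : ℝ) := hlow
        _ ≤ (N : ℝ) := by exact_mod_cast hle
        _ ≤ (n : ℝ) := hNn
    · right
      by_contra hcon
      push_neg at hcon
      obtain ⟨h1, h2, h3⟩ := hcon
      rw [numComps_eq G x (fun k => B ≤ (k : ℝ) ∧ (k : ℝ) < b1)] at h1
      rw [numComps_eq G x (fun k => b1 ≤ (k : ℝ) ∧ (k : ℝ) < b2)] at h2
      rw [numComps_eq G x (fun k => b2 ≤ (k : ℝ) ∧ (k : ℝ) < b3)] at h3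
      rw [cover_eq G x (fun k => b3 ≤ (k : ℝ))] at hC
      have hC' := not_le.mp hC
      -- finsets
      set SJ1 := univ.filter (fun c : (G.induce {v : V | v ≠ x}).ConnectedComponent =>
        B ≤ (compSize G x c : ℝ) ∧ (compSize G x c : ℝ) < b1) with hSJ1
      set SJ2 := univ.filter (fun c : (G.induce {v : V | v ≠ x}).ConnectedComponent =>
        b1 ≤ (compSize G x c : ℝ) ∧ (compSize G x c : ℝ) < b2) with hSJ2
      set SJ3 := univ.filter (fun c : (G.induce {v : V | v ≠ x}).ConnectedComponent =>
        b2 ≤ (compSize G x c : ℝ) ∧ (compSize G x c : ℝ) < b3) with hSJ3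
      set SI := univ.filter (fun c : (G.induce {v : V | v ≠ x}).ConnectedComponent =>
        b3 ≤ (compSize G x c : ℝ)) with hSI
      set Srest := univ.filter (fun c : (G.induce {v : V | v ≠ x}).ConnectedComponent =>
        ¬ b3 ≤ (compSize G x c : ℝ)) with hSrest
      set EJ := Srest.filter (fun c => B ≤ (compSize G x c : ℝ)) with hEJ
      set E0 := Srest.filter (fun c => ¬ B ≤ (compSize G x c : ℝ)) with hE0
      -- splitting of sums and cards
      have hsplit : (∑ c ∈ SI, compSize G x c) + ((∑ c ∈ EJ, compSize G x c)
          + (∑ c ∈ E0, compSize G x c)) = N := by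
        rw [hNdef, ← Finset.sum_filter_add_sum_filter_not univ
          (fun c => b3 ≤ (compSize G x c : ℝ)) (compSize G x), ← hSI, ← hSrest]
        rw [← Finset.sum_filter_add_sum_filter_not Srest
          (fun c => B ≤ (compSize G x c : ℝ)) (compSize G x), ← hEJ, ← hE0]
      have hcards : SI.card + (EJ.card + E0.card) ≤ G.degree x := by
        have e1 : SI.card + Srest.card = Fintype.card
            ((G.induce {v : V | v ≠ x}).ConnectedComponent) := by
          rw [hSI, hSrest, ← Finset.card_univ]
          exact Finset.card_filter_add_card_filter_not _
        have e2 : EJ.card + E0.card = Srest.card := by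
          rw [hEJ, hE0]
          exact Finset.card_filter_add_card_filter_not _
        omega
      -- cover bounds on the J classes
      have hDJ : ((∑ c ∈ EJ, compSize G x c : ℕ) : ℝ) < (n : ℝ) / 4 := by
        have hsub : EJ ⊆ SJ1 ∪ SJ2 ∪ SJ3 := by
          intro c hc
          rw [hEJ, mem_filter, hSrest, mem_filter] at hc
          obtain ⟨⟨-, hub⟩, hlb⟩ := hc
          have hub' : (compSize G x c : ℝ) < b3 := not_le.mp hub
          simp only [Finset.mem_union, hSJ1, hSJ2, hSJ3, mem_filter, mem_univ, true_and]
          rcases lt_or_ge (compSize G x c : ℝ) b1 with h | h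
          · exact Or.inl (Or.inl ⟨hlb, h⟩)
          · rcases lt_or_ge (compSize G x c : ℝ) b2 with h' | h'
            · exact Or.inl (Or.inr ⟨h, h'⟩)
            · exact Or.inr ⟨h', hub'⟩
        have hd12 : Disjoint SJ1 SJ2 := by
          rw [Finset.disjoint_left]
          intro c hc1 hc2
          rw [hSJ1, mem_filter] at hc1
          rw [hSJ2, mem_filter] at hc2
          linarith [hc1.2.2, hc2.2.1]
        have hd123 : Disjoint (SJ1 ∪ SJ2) SJ3 := by
          rw [Finset.disjoint_left]
          intro c hc1 hc2
          rw [hSJ3, mem_filter] at hc2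
          rw [Finset.mem_union] at hc1
          rcases hc1 with h | h
          · rw [hSJ1, mem_filter] at h
            linarith [h.2.2, hc2.2.1]
          · rw [hSJ2, mem_filter] at h
            linarith [h.2.2, hc2.2.1]
        have hsumle : (∑ c ∈ EJ, compSize G x c) ≤
            (∑ c ∈ SJ1, compSize G x c) + (∑ c ∈ SJ2, compSize G x c)
              + (∑ c ∈ SJ3, compSize G x c) := by
          calc (∑ c ∈ EJ, compSize G x c) ≤ ∑ c ∈ SJ1 ∪ SJ2 ∪ SJ3, compSize G x c :=
              Finset.sum_le_sum_of_subset hsub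
            _ = _ := by rw [Finset.sum_union hd123, Finset.sum_union hd12]
        have bound : ∀ (S : Finset ((G.induce {v : V | v ≠ x}).ConnectedComponent)) (β : ℝ),
            (∀ c ∈ S, (compSize G x c : ℝ) ≤ β) →
            ((∑ c ∈ S, compSize G x c : ℕ) : ℝ) ≤ (S.card : ℝ) * β := by
          intro S β hβ
          push_cast
          simpa [nsmul_eq_mul] using Finset.sum_le_card_nsmul S
            (fun c => (compSize G x c : ℝ)) β hβ
        have hB1 : ((∑ c ∈ SJ1, compSize G x c : ℕ) : ℝ) < (n : ℝ) / 12 := by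
          have hb := bound SJ1 b1 (fun c hc => ((mem_filter.mp hc).2.2).le)
          have hmul : (SJ1.card : ℝ) * b1 < ((n : ℝ) / (12 * b1)) * b1 :=
            mul_lt_mul_of_pos_right h1 hb1pos
          have heq : ((n : ℝ) / (12 * b1)) * b1 = (n : ℝ) / 12 := by
            field_simp
          linarith
        have hB2 : ((∑ c ∈ SJ2, compSize G x c : ℕ) : ℝ) < (n : ℝ) / 12 := by
          have hb := bound SJ2 b2 (fun c hc => ((mem_filter.mp hc).2.2).le)
          have hmul : (SJ2.card : ℝ) * b2 < ((n : ℝ) / (12 * b2)) * b2 :=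
            mul_lt_mul_of_pos_right h2 hb2pos
          have heq : ((n : ℝ) / (12 * b2)) * b2 = (n : ℝ) / 12 := by
            field_simp
          linarith
        have hB3 : ((∑ c ∈ SJ3, compSize G x c : ℕ) : ℝ) < (n : ℝ) / 12 := by
          have hb := bound SJ3 b3 (fun c hc => ((mem_filter.mp hc).2.2).le)
          have hmul : (SJ3.card : ℝ) * b3 < ((n : ℝ) / (12 * A * L ^ (4 + ε))) * b3 :=
            mul_lt_mul_of_pos_right h3 hb3pos
          have heq : ((n : ℝ) / (12 * A * L ^ (4 + ε))) * b3 = (n : ℝ) / 12 := by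
            rw [hb3def]
            field_simp
          linarith
        have : ((∑ c ∈ EJ, compSize G x c : ℕ) : ℝ) ≤
            ((∑ c ∈ SJ1, compSize G x c : ℕ) : ℝ) + ((∑ c ∈ SJ2, compSize G x c : ℕ) : ℝ)
              + ((∑ c ∈ SJ3, compSize G x c : ℕ) : ℝ) := by exact_mod_cast hsumle
        linarith
      -- bound on E0 sum
      have hZ : ((∑ c ∈ E0, compSize G x c : ℕ) : ℝ) ≤ (E0.card : ℝ) * B := by
        push_cast
        refine le_trans ?_ (le_of_eq (nsmul_eq_mul _ _))
        exact Finset.sum_le_card_nsmul E0 (fun c => (compSize G x c : ℝ)) B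
          (fun c hc => (not_le.mp (mem_filter.mp hc).2).le)
      have hNreal : ((n : ℝ)) = 1 + ((∑ c ∈ SI, compSize G x c : ℕ) : ℝ)
          + ((∑ c ∈ EJ, compSize G x c : ℕ) : ℝ) + ((∑ c ∈ E0, compSize G x c : ℕ) : ℝ) := by
        have h' : n = 1 + ((∑ c ∈ SI, compSize G x c) + ((∑ c ∈ EJ, compSize G x c)
            + (∑ c ∈ E0, compSize G x c))) := by rw [hsplit]; exact htot
        have h'' : n = 1 + ∑ c ∈ SI, compSize G x c + ∑ c ∈ EJ, compSize G x c
            + ∑ c ∈ E0, compSize G x c := by omega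
        exact_mod_cast h''
      rcases Nat.eq_zero_or_pos (SI.card + EJ.card) with hm | hm
      · -- no big components at all
        have hSIe : SI = ∅ := Finset.card_eq_zero.mp (by omega)
        have hEJe : EJ = ∅ := Finset.card_eq_zero.mp (by omega)
        have hE0deg : (E0.card : ℝ) ≤ (G.degree x : ℝ) := by exact_mod_cast by omega
        have hZ2 : (E0.card : ℝ) * B ≤ (G.degree x : ℝ) * B :=
          mul_le_mul_of_nonneg_right hE0deg hBpos.le
        have hdb : (G.degree x : ℝ) * B < (n : ℝ) / 4 := by
          have := mul_lt_mul_of_pos_right hdegx hBpos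
          linarith [hprod ▸ this]
        rw [hSIe, hEJe] at hNreal
        simp only [Finset.sum_empty, Nat.cast_zero] at hNreal
        linarith
      · rcases le_or_gt 1 B with hB1' | hB1'
        · -- B ≥ 1 and at least one big component
          have hm' : (1 : ℝ) ≤ ((SI.card + EJ.card : ℕ) : ℝ) := by exact_mod_cast hm
          have hcards' : (E0.card : ℝ) ≤ (G.degree x : ℝ) - ((SI.card + EJ.card : ℕ) : ℝ) := by
            have : E0.card + (SI.card + EJ.card) ≤ G.degree x := by omega
            have h' : ((E0.card + (SI.card + EJ.card) : ℕ) : ℝ) ≤ (G.degree x : ℝ) := by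
              exact_mod_cast this
            push_cast at h' ⊢
            linarith
          have hZ2 : (E0.card : ℝ) * B ≤
              ((G.degree x : ℝ) - ((SI.card + EJ.card : ℕ) : ℝ)) * B :=
            mul_le_mul_of_nonneg_right hcards' hBpos.le
          rw [sub_mul] at hZ2
          have hdb : (G.degree x : ℝ) * B < (n : ℝ) / 4 := by
            have := mul_lt_mul_of_pos_right hdegx hBpos
            linarith [hprod ▸ this]
          have hmB : (1 : ℝ) ≤ ((SI.card + EJ.card : ℕ) : ℝ) * B := by
            calc (1 : ℝ) = 1 * 1 := by ring
              _ ≤ ((SI.card + EJ.card : ℕ) : ℝ) * B :=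
                mul_le_mul hm' hB1' one_pos.le (Nat.cast_nonneg _)
          linarith
        · -- B < 1 : no small components exist
          have hE0e : E0 = ∅ := by
            rw [Finset.eq_empty_iff_forall_notMem]
            intro c hc
            have hlt := not_le.mp (mem_filter.mp hc).2
            have hge : (1 : ℝ) ≤ (compSize G x c : ℝ) := by
              exact_mod_cast compSize_pos G x c
            linarith
          rw [hE0e] at hNreal
          simp only [Finset.sum_empty, Nat.cast_zero] at hNreal
          have hCI : 2 * (∑ c ∈ SI, compSize G x c) < n := by
            have : 2 * ((∑ c ∈ SI, compSize G x c : ℕ) : ℝ) < (n : ℝ) := by linarith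
            exact_mod_cast this
          have hDJ' : 4 * (∑ c ∈ EJ, compSize G x c) < n := by
            have : 4 * ((∑ c ∈ EJ, compSize G x c : ℕ) : ℝ) < (n : ℝ) := by linarith
            exact_mod_cast this
          have hNnat : n = 1 + (∑ c ∈ SI, compSize G x c) + (∑ c ∈ EJ, compSize G x c) := by
            have := hNreal
            exact_mod_cast this
          omega
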